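/- Let G be a graph, k ≥ 2, and U ⊆ V(G). The maximum number of vertices of U that can be covered by a union of k matchings equals |U| − max{|S| − k·|N(S)| : S ⊆ U is a stable set}. -/

import Mathlib

/-- `M` is a matching of `G`: a set of edges of `G` that are pairwise vertex-disjoint. -/
def IsMatching {V : Type*} (G : SimpleGraph V) (M : Finset (Sym2 V)) : Prop :=
  ↑M ⊆ G.edgeSet ∧ (M : Set (Sym2 V)).Pairwise fun e f => ∀ v : V, ¬(v ∈ e ∧ v ∈ f)

/-- A vertex `v` is covered by an edge set `F` if some edge of `F` is incident to it. -/
def Covers {V : Type*} (F : Finset (Sym2 V)) (v : V) : Prop := ∃ e ∈ F, v ∈ e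

instance {V : Type*} [DecidableEq V] (F : Finset (Sym2 V)) (v : V) : Decidable (Covers F v) :=
  inferInstanceAs (Decidable (∃ e ∈ F, v ∈ e))

/-- A stable (independent) set of vertices. -/
def IsStable {V : Type*} (G : SimpleGraph V) (S : Finset V) : Prop :=
  ∀ u ∈ S, ∀ v ∈ S, ¬ G.Adj u v

/-- The external neighborhood `N(S)`. -/
def nbr {V : Type*} [Fintype V] [DecidableEq V] (G : SimpleGraph V) [DecidableRel G.Adj]
    (S : Finset V) : Finset V :=
  Finset.univ.filter fun w => w ∉ S ∧ ∃ u ∈ S, G.Adj u w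

/-- degree of a vertex in an edge set -/
def degF {V : Type*} [DecidableEq V] (F : Finset (Sym2 V)) (v : V) : ℕ :=
  (F.filter fun e => v ∈ e).card

namespace Stmt5Aux
set_option linter.unusedSectionVars false

variable {V : Type*} [Fintype V] [DecidableEq V] (G : SimpleGraph V) [DecidableRel G.Adj]
  (k : ℕ) (U : Finset V)

/-- `v` belongs to the star with center `c` (as center or leaf), provided the star is active. -/
def InStar (L : V → Finset V) (c v : V) : Prop := L c ≠ ∅ ∧ (v = c ∨ v ∈ L c)

/-- A disjoint system of stars, each with at most `k` leaves. -/
def GoodSys (L : V → Finset V) : Prop :=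
  (∀ c, ∀ v ∈ L c, G.Adj c v) ∧ (∀ c, (L c).card ≤ k) ∧
    ∀ v c c', InStar L c v → InStar L c' v → c = c'

/-- `v` is covered by the star system. -/
def covS (L : V → Finset V) (v : V) : Prop := ∃ c, InStar L c v

/-- number of covered vertices of `U`. -/
noncomputable def covN (L : V → Finset V) : ℕ :=
  (@Finset.filter _ (fun v => covS L v) (fun _ => Classical.propDecidable _) U).card

variable {G k U}

lemma covS_of_mem {L : V → Finset V} {c v : V} (h : v ∈ L c) : covS L v :=
  ⟨c, Finset.ne_empty_of_mem h, Or.inr h⟩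

lemma covS_center {L : V → Finset V} {c : V} (h : L c ≠ ∅) : covS L c := ⟨c, h, Or.inl rfl⟩

lemma not_covS_empty {L : V → Finset V} {v : V} (h : ¬ covS L v) : L v = ∅ := by
  by_contra hne; exact h (covS_center hne)

lemma not_covS_not_mem {L : V → Finset V} {v c : V} (h : ¬ covS L v) : v ∉ L c :=
  fun hm => h (covS_of_mem hm)

lemma leaf_ne_center (hG : GoodSys G k L) {c v : V} (h : v ∈ L c) : v ≠ c :=
  fun hvc => G.irrefl (hvc ▸ hG.1 c v h)

lemma center_not_leaf (hG : GoodSys G k L) {c v : V} (hne : L v ≠ ∅) (h : v ∈ L c) : False := by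
  have := hG.2.2 v v c ⟨hne, Or.inl rfl⟩ ⟨Finset.ne_empty_of_mem h, Or.inr h⟩
  exact leaf_ne_center hG h this

lemma covS_mono {L L' : V → Finset V} (h : ∀ c, L c ⊆ L' c) {v : V} (hv : covS L v) :
    covS L' v := by
  obtain ⟨c, hne, hm⟩ := hv
  obtain ⟨x, hx⟩ := Finset.nonempty_iff_ne_empty.2 hne
  refine ⟨c, Finset.ne_empty_of_mem (h c hx), ?_⟩
  rcases hm with h1 | h1
  · exact Or.inl h1
  · exact Or.inr (h c h1)

lemma covN_lt {L L' : V → Finset V} {x₀ : V}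
    (hx₀U : x₀ ∈ U) (h1 : ¬ covS L x₀) (h2 : covS L' x₀)
    (hsub : ∀ x ∈ U, covS L x → covS L' x) : covN U L < covN U L' := by
  classical
  apply Finset.card_lt_card
  rw [Finset.ssubset_iff_of_subset]
  · exact ⟨x₀, by simp [Finset.mem_filter, hx₀U, h2], by simp [Finset.mem_filter, h1]⟩
  · intro x hx
    rw [Finset.mem_filter] at hx ⊢
    exact ⟨hx.1, hsub x hx.1 hx.2⟩


lemma instar_update_self {L : V → Finset V} {w : V} {A : Finset V} {x : V} :
    InStar (Function.update L w A) w x ↔ (A ≠ ∅ ∧ (x = w ∨ x ∈ A)) := by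
  simp [InStar, Function.update_self]

lemma instar_update_ne {L : V → Finset V} {w c : V} {A : Finset V} {x : V} (h : c ≠ w) :
    InStar (Function.update L w A) c x ↔ InStar L c x := by
  simp [InStar, Function.update_of_ne h]

lemma goodSys_update (hG : GoodSys G k L) {w : V} {A : Finset V}
    (ha : ∀ v ∈ A, G.Adj w v) (hc : A.card ≤ k)
    (hnew : ∀ v ∈ A, v ∈ L w ∨ ¬ covS L v)
    (hwfree : A ≠ ∅ → ∀ c, c ≠ w → ¬ InStar L c w) :
    GoodSys G k (Function.update L w A) := by
  obtain ⟨hadj, hcard, huniq⟩ := hG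
  refine ⟨?_, ?_, ?_⟩
  · intro c v hv
    rcases eq_or_ne c w with rfl | hne
    · rw [Function.update_self] at hv; exact ha v hv
    · rw [Function.update_of_ne hne] at hv; exact hadj c v hv
  · intro c
    rcases eq_or_ne c w with rfl | hne
    · rw [Function.update_self]; exact hc
    · rw [Function.update_of_ne hne]; exact hcard c
  · intro x c c' h h'
    by_cases hcw : c = w <;> by_cases hcw' : c' = w
    · rw [hcw, hcw']
    · exfalso
      rw [hcw, instar_update_self] at h
      rw [instar_update_ne hcw'] at h'
      rcases h.2 with h2 | hxA
      · rw [h2] at h'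
        exact hwfree h.1 c' hcw' h'
      · rcases hnew x hxA with hxw | hxcov
        · exact hcw' (huniq x c' w h' ⟨Finset.ne_empty_of_mem hxw, Or.inr hxw⟩)
        · exact hxcov ⟨c', h'⟩
    · exfalso
      rw [hcw', instar_update_self] at h'
      rw [instar_update_ne hcw] at h
      rcases h'.2 with h2 | hxA
      · rw [h2] at h
        exact hwfree h'.1 c hcw h
      · rcases hnew x hxA with hxw | hxcov
        · exact hcw (huniq x c w h ⟨Finset.ne_empty_of_mem hxw, Or.inr hxw⟩)
        · exact hxcov ⟨c, h⟩
    · rw [instar_update_ne hcw] at h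
      rw [instar_update_ne hcw'] at h'
      exact huniq x c c' h h'

/-- Main local lemma: any neighbour of an uncovered `U`-vertex has a full star of `k` leaves. -/
lemma hole_nbr_full (hk : 2 ≤ k) (hG : GoodSys G k L)
    (hmax : ∀ L', GoodSys G k L' → covN U L' ≤ covN U L) {v w : V}
    (hvU : v ∈ U) (hv : ¬ covS L v) (ha : G.Adj v w) : (L w).card = k := by
  have hvw : v ≠ w := ha.ne
  -- first, w is covered
  have hcovw : covS L w := by
    by_contra hw
    have hLw : L w = ∅ := not_covS_empty hw
    set L' := Function.update L w {v} with hL'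
    have hG' : GoodSys G k L' := by
      apply goodSys_update hG
      · intro x hx; rw [Finset.mem_singleton] at hx; subst hx; exact ha.symm
      · simpa using Nat.one_le_of_lt hk
      · intro x hx; rw [Finset.mem_singleton] at hx; subst hx; exact Or.inr hv
      · intro _ c hc hin; exact hw ⟨c, hin⟩
    have hnewc : covS L' v := ⟨w, by rw [hL', instar_update_self]; simp⟩
    have hlt : covN U L < covN U L' := by
      apply covN_lt hvU hv hnewc
      intro x _ hx
      obtain ⟨c, hc⟩ := hx
      have hcw : c ≠ w := by rintro rfl; exact hc.1 hLw
      exact ⟨c, by rw [hL', instar_update_ne hcw]; exact hc⟩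
    exact absurd (hmax L' hG') (not_le.2 hlt)
  obtain ⟨c₀, hc₀ne, hc₀⟩ := hcovw
  rcases hc₀ with rfl | hwleaf
  · -- w is a center; show it is full
    by_contra hcardne
    have hcardlt : (L w).card < k := lt_of_le_of_ne (hG.2.1 w) hcardne
    have hvnotin : v ∉ L w := not_covS_not_mem hv
    set L' := Function.update L w (insert v (L w)) with hL'
    have hG' : GoodSys G k L' := by
      apply goodSys_update hG
      · intro x hx
        rcases Finset.mem_insert.1 hx with rfl | hx
        · exact ha.symm
        · exact hG.1 w x hx
      · rw [Finset.card_insert_of_notMem hvnotin]; omega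
      · intro x hx
        rcases Finset.mem_insert.1 hx with rfl | hx
        · exact Or.inr hv
        · exact Or.inl hx
      · intro _ c hc hin
        exact hc (hG.2.2 w c w hin ⟨hc₀ne, Or.inl rfl⟩)
    have hnewc : covS L' v := ⟨w, by rw [hL', instar_update_self]; simp⟩
    have hlt : covN U L < covN U L' := by
      apply covN_lt hvU hv hnewc
      intro x _ hx
      obtain ⟨c, hc⟩ := hx
      by_cases hcw : c = w
      · rw [hcw] at hc
        have hor : x = w ∨ x ∈ insert v (L w) := by
          rcases hc.2 with h2 | hx2
          · exact Or.inl h2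
          · exact Or.inr (Finset.mem_insert_of_mem hx2)
        exact ⟨w, by rw [hL', instar_update_self]; exact ⟨by simp, hor⟩⟩
      · exact ⟨c, by rw [hL', instar_update_ne hcw]; exact hc⟩
    exact absurd (hmax L' hG') (not_le.2 hlt)
  · -- w is a leaf of the star of c₀ : impossible
    exfalso
    have hwc₀ : w ≠ c₀ := leaf_ne_center hG hwleaf
    have hLw : L w = ∅ := by
      by_contra hne
      exact center_not_leaf hG hne hwleaf
    have hcovc₀ : covS L c₀ := covS_center hc₀ne
    have hvc₀ : v ≠ c₀ := fun h => hv (by rw [h]; exact hcovc₀)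
    have hvLc₀ : v ∉ L c₀ := not_covS_not_mem hv
    rcases lt_or_ge 1 (L c₀).card with hbig | hsmall
    · -- c₀ has another leaf : move w out into its own star with leaf v
      set L₁ := Function.update L c₀ ((L c₀).erase w) with hL₁
      have hL₁c₀ : L₁ c₀ = (L c₀).erase w := by rw [hL₁, Function.update_self]
      have hL₁o : ∀ c, c ≠ c₀ → L₁ c = L c := fun c hc => by
        rw [hL₁, Function.update_of_ne hc]
      have hG₁ : GoodSys G k L₁ := by
        rw [hL₁]
        apply goodSys_update hG
        · intro x hx; exact hG.1 c₀ x (Finset.mem_of_mem_erase hx)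
        · exact le_trans (Finset.card_le_card (Finset.erase_subset _ _)) (hG.2.1 c₀)
        · intro x hx; exact Or.inl (Finset.mem_of_mem_erase hx)
        · intro _ c hc hin
          exact hc (hG.2.2 c₀ c c₀ hin ⟨hc₀ne, Or.inl rfl⟩)
      have hcovL₁ : ∀ x, covS L₁ x → covS L x := by
        intro x hx
        obtain ⟨c, hcne, hcm⟩ := hx
        by_cases hcc : c = c₀
        · rw [hcc, hL₁c₀] at hcne hcm
          refine ⟨c₀, hc₀ne, ?_⟩
          rcases hcm with h2 | h2
          · exact Or.inl h2
          · exact Or.inr (Finset.mem_of_mem_erase h2)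
        · rw [hL₁o c hcc] at hcne hcm
          exact ⟨c, hcne, hcm⟩
      set L₂ := Function.update L₁ w ({v} : Finset V) with hL₂
      have hL₂w : L₂ w = {v} := by rw [hL₂, Function.update_self]
      have hL₂o : ∀ c, c ≠ w → L₂ c = L₁ c := fun c hc => by
        rw [hL₂, Function.update_of_ne hc]
      have hG₂ : GoodSys G k L₂ := by
        rw [hL₂]
        apply goodSys_update hG₁
        · intro x hx; rw [Finset.mem_singleton] at hx; rw [hx]; exact ha.symm
        · simpa using Nat.one_le_of_lt hk
        · intro x hx; rw [Finset.mem_singleton] at hx; rw [hx]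
          exact Or.inr (fun hc => hv (hcovL₁ v hc))
        · intro _ c hc hin
          obtain ⟨hne1, hm1⟩ := hin
          by_cases hcc : c = c₀
          · rw [hcc, hL₁c₀] at hm1
            rcases hm1 with h1 | h1
            · exact hwc₀ h1
            · exact (Finset.notMem_erase w _) h1
          · rw [hL₁o c hcc] at hne1 hm1
            exact hcc (hG.2.2 w c c₀ ⟨hne1, hm1⟩ ⟨hc₀ne, Or.inr hwleaf⟩)
      have herase_ne : (L c₀).erase w ≠ ∅ := by
        have h1 := Finset.card_erase_of_mem hwleaf
        have h2 : 0 < ((L c₀).erase w).card := by omega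
        exact (Finset.card_pos.1 h2).ne_empty
      have hL₂c₀ : L₂ c₀ = (L c₀).erase w := by
        rw [hL₂o c₀ (Ne.symm hwc₀), hL₁c₀]
      have hnewc : covS L₂ v :=
        ⟨w, by rw [hL₂w]; simp, Or.inr (by rw [hL₂w]; simp)⟩
      have hlt : covN U L < covN U L₂ := by
        apply covN_lt hvU hv hnewc
        intro x _ hx
        obtain ⟨c, hcne, hcm⟩ := hx
        by_cases hcc : c = c₀
        · rw [hcc] at hcm
          rcases hcm with h2 | h2
          · exact ⟨c₀, by rw [hL₂c₀]; exact herase_ne, Or.inl h2⟩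
          · by_cases hxw : x = w
            · exact ⟨w, by rw [hL₂w]; simp, Or.inl hxw⟩
            · refine ⟨c₀, by rw [hL₂c₀]; exact herase_ne, Or.inr ?_⟩
              rw [hL₂c₀]
              exact Finset.mem_erase.2 ⟨hxw, h2⟩
        · have hcw : c ≠ w := fun h => hcne (by rw [h]; exact hLw)
          have hL₂c : L₂ c = L c := by rw [hL₂o c hcw, hL₁o c hcc]
          exact ⟨c, by rw [hL₂c]; exact hcne, by rw [hL₂c]; exact hcm⟩
      exact absurd (hmax L₂ hG₂) (not_le.2 hlt)
    · -- L c₀ = {w} : dissolve the star, make w a center with leaves {c₀, v}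
      have hLc₀ : L c₀ = {w} := by
        have hcard1 : (L c₀).card = 1 :=
          le_antisymm hsmall (Finset.card_pos.2 (Finset.nonempty_iff_ne_empty.2 hc₀ne))
        obtain ⟨y, hy⟩ := Finset.card_eq_one.1 hcard1
        rw [hy] at hwleaf ⊢
        rw [Finset.mem_singleton] at hwleaf
        rw [hwleaf]
      set L₁ := Function.update L c₀ (∅ : Finset V) with hL₁
      have hL₁c₀ : L₁ c₀ = ∅ := by rw [hL₁, Function.update_self]
      have hL₁o : ∀ c, c ≠ c₀ → L₁ c = L c := fun c hc => by
        rw [hL₁, Function.update_of_ne hc]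
      have hG₁ : GoodSys G k L₁ := by
        rw [hL₁]
        apply goodSys_update hG
        · intro x hx; exact absurd hx (Finset.notMem_empty x)
        · simp
        · intro x hx; exact absurd hx (Finset.notMem_empty x)
        · intro h; exact absurd rfl h
      have hcovL₁ : ∀ x, covS L₁ x → covS L x := by
        intro x hx
        obtain ⟨c, hcne, hcm⟩ := hx
        by_cases hcc : c = c₀
        · rw [hcc, hL₁c₀] at hcne; exact absurd rfl hcne
        · rw [hL₁o c hcc] at hcne hcm; exact ⟨c, hcne, hcm⟩
      set L₂ := Function.update L₁ w ({c₀, v} : Finset V) with hL₂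
      have hL₂w : L₂ w = {c₀, v} := by rw [hL₂, Function.update_self]
      have hL₂o : ∀ c, c ≠ w → L₂ c = L₁ c := fun c hc => by
        rw [hL₂, Function.update_of_ne hc]
      have hnotc₀ : ∀ c, c ≠ c₀ → ¬ InStar L c c₀ := fun c hc hin =>
        hc (hG.2.2 c₀ c c₀ hin ⟨hc₀ne, Or.inl rfl⟩)
      have hG₂ : GoodSys G k L₂ := by
        rw [hL₂]
        apply goodSys_update hG₁
        · intro x hx
          rcases Finset.mem_insert.1 hx with h1 | h1
          · rw [h1]; exact (hG.1 c₀ w hwleaf).symm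
          · rw [Finset.mem_singleton] at h1; rw [h1]; exact ha.symm
        · refine le_trans (Finset.card_insert_le _ _) ?_
          simp only [Finset.card_singleton]
          omega
        · intro x hx
          refine Or.inr ?_
          intro hcov
          obtain ⟨c, hcne, hcm⟩ := hcov
          by_cases hcc : c = c₀
          · rw [hcc, hL₁c₀] at hcne; exact hcne rfl
          · rw [hL₁o c hcc] at hcne hcm
            rcases Finset.mem_insert.1 hx with h1 | h1
            · rw [h1] at hcm
              exact hnotc₀ c hcc ⟨hcne, hcm⟩
            · rw [Finset.mem_singleton] at h1
              rw [h1] at hcm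
              exact hv ⟨c, hcne, hcm⟩
        · intro _ c hc hin
          obtain ⟨hcne, hcm⟩ := hin
          by_cases hcc : c = c₀
          · rw [hcc, hL₁c₀] at hcne; exact hcne rfl
          · rw [hL₁o c hcc] at hcne hcm
            exact hcc (hG.2.2 w c c₀ ⟨hcne, hcm⟩ ⟨hc₀ne, Or.inr hwleaf⟩)
      have hnewc : covS L₂ v :=
        ⟨w, by rw [hL₂w]; simp, Or.inr (by rw [hL₂w]; simp)⟩
      have hlt : covN U L < covN U L₂ := by
        apply covN_lt hvU hv hnewc
        intro x _ hx
        obtain ⟨c, hcne, hcm⟩ := hx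
        by_cases hcc : c = c₀
        · rw [hcc] at hcm
          refine ⟨w, by rw [hL₂w]; simp, ?_⟩
          rcases hcm with h2 | h2
          · rw [hL₂w]; exact Or.inr (by rw [h2]; simp)
          · rw [hLc₀, Finset.mem_singleton] at h2
            exact Or.inl h2
        · have hcw : c ≠ w := fun h => hcne (by rw [h]; exact hLw)
          have hL₂c : L₂ c = L c := by rw [hL₂o c hcw, hL₁o c hcc]
          exact ⟨c, by rw [hL₂c]; exact hcne, by rw [hL₂c]; exact hcm⟩
      exact absurd (hmax L₂ hG₂) (not_le.2 hlt)

/-- Swapping a leaf `p` of the star at `w` for the uncovered vertex `v`. -/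
lemma swap_hole (hG : GoodSys G k L)
    (hmax : ∀ L', GoodSys G k L' → covN U L' ≤ covN U L) {v w p : V}
    (hvU : v ∈ U) (hv : ¬ covS L v) (ha : G.Adj v w) (hp : p ∈ L w) :
    p ∈ U ∧ GoodSys G k (Function.update L w (insert v ((L w).erase p))) ∧
      covN U (Function.update L w (insert v ((L w).erase p))) = covN U L ∧
      ¬ covS (Function.update L w (insert v ((L w).erase p))) p ∧
      ∀ c, ((Function.update L w (insert v ((L w).erase p))) c).card = (L c).card := by
  classical
  set Lsw := Function.update L w (insert v ((L w).erase p)) with hLsw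
  have hwne : L w ≠ ∅ := Finset.ne_empty_of_mem hp
  have hpw : p ≠ w := leaf_ne_center hG hp
  have hvw : v ≠ w := ha.ne
  have hvp : v ≠ p := fun h => hv (by rw [h]; exact covS_of_mem hp)
  have hvLw : v ∉ L w := not_covS_not_mem hv
  have hLsww : Lsw w = insert v ((L w).erase p) := by rw [hLsw, Function.update_self]
  have hLswo : ∀ c, c ≠ w → Lsw c = L c := fun c hc => by
    rw [hLsw, Function.update_of_ne hc]
  have hvnoterase : v ∉ (L w).erase p := fun h => hvLw (Finset.mem_of_mem_erase h)
  have hcard1 : 1 ≤ (L w).card := Finset.card_pos.2 ⟨p, hp⟩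
  have hcardw : (insert v ((L w).erase p)).card = (L w).card := by
    rw [Finset.card_insert_of_notMem hvnoterase, Finset.card_erase_of_mem hp]
    omega
  have hcnt : ∀ c, (Lsw c).card = (L c).card := by
    intro c
    by_cases hc : c = w
    · rw [hc, hLsww, hcardw]
    · rw [hLswo c hc]
  have hwfree : ∀ c, c ≠ w → ¬ InStar L c w := fun c hc hin =>
    hc (hG.2.2 w c w hin ⟨hwne, Or.inl rfl⟩)
  have hGsw : GoodSys G k Lsw := by
    rw [hLsw]
    apply goodSys_update hG
    · intro x hx
      rcases Finset.mem_insert.1 hx with h1 | h1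
      · rw [h1]; exact ha.symm
      · exact hG.1 w x (Finset.mem_of_mem_erase h1)
    · rw [hcardw]; exact hG.2.1 w
    · intro x hx
      rcases Finset.mem_insert.1 hx with h1 | h1
      · rw [h1]; exact Or.inr hv
      · exact Or.inl (Finset.mem_of_mem_erase h1)
    · exact fun _ => hwfree
  have hiff : ∀ x, covS Lsw x ↔ ((covS L x ∧ x ≠ p) ∨ x = v) := by
    intro x
    constructor
    · rintro ⟨c, hcne, hcm⟩
      by_cases hcw : c = w
      · rw [hcw, hLsww] at hcm
        rcases hcm with h1 | h1
        · exact Or.inl ⟨by rw [h1]; exact covS_center hwne, by rw [h1]; exact hpw.symm⟩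
        · rcases Finset.mem_insert.1 h1 with h2 | h2
          · exact Or.inr h2
          · exact Or.inl ⟨covS_of_mem (Finset.mem_of_mem_erase h2), (Finset.mem_erase.1 h2).1⟩
      · rw [hLswo c hcw] at hcne hcm
        refine Or.inl ⟨⟨c, hcne, hcm⟩, fun hxp => ?_⟩
        rw [hxp] at hcm
        exact hcw (hG.2.2 p c w ⟨hcne, hcm⟩ ⟨hwne, Or.inr hp⟩)
    · rintro (⟨⟨c, hcne, hcm⟩, hxp⟩ | h1)
      · by_cases hcw : c = w
        · rw [hcw] at hcm
          refine ⟨w, by rw [hLsww]; simp, ?_⟩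
          rw [hLsww]
          rcases hcm with h2 | h2
          · exact Or.inl h2
          · exact Or.inr (Finset.mem_insert_of_mem (Finset.mem_erase.2 ⟨hxp, h2⟩))
        · rw [← hLswo c hcw] at hcne hcm
          exact ⟨c, hcne, hcm⟩
      · exact ⟨w, by rw [hLsww]; simp, by rw [h1, hLsww]; exact Or.inr (Finset.mem_insert_self _ _)⟩
  have hcovv : covS Lsw v := (hiff v).2 (Or.inr rfl)
  have hpU : p ∈ U := by
    by_contra hpU
    have hlt : covN U L < covN U Lsw :=
      covN_lt hvU hv hcovv
        (fun x hxU hcov => (hiff x).2 (Or.inl ⟨hcov, fun h => hpU (by rw [← h]; exact hxU)⟩))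
    exact absurd (hmax Lsw hGsw) (not_le.2 hlt)
  have hnotp : ¬ covS Lsw p := by
    intro hcov
    rcases (hiff p).1 hcov with ⟨_, h2⟩ | h1
    · exact h2 rfl
    · exact hvp h1.symm
  have hcN : covN U Lsw = covN U L := by
    have hset : (@Finset.filter _ (fun x => covS Lsw x) (fun _ => Classical.propDecidable _) U)
        = insert v ((@Finset.filter _ (fun x => covS L x)
            (fun _ => Classical.propDecidable _) U).erase p) := by
      ext x
      simp only [Finset.mem_filter, Finset.mem_insert, Finset.mem_erase]
      constructor
      · rintro ⟨hxU, hcov⟩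
        rcases (hiff x).1 hcov with ⟨h1, h2⟩ | h1
        · exact Or.inr ⟨h2, hxU, h1⟩
        · exact Or.inl h1
      · rintro (h1 | ⟨h1, h2, h3⟩)
        · exact ⟨by rw [h1]; exact hvU, (hiff x).2 (Or.inr h1)⟩
        · exact ⟨h2, (hiff x).2 (Or.inl ⟨h3, h1⟩)⟩
    have hpmem : p ∈ (@Finset.filter _ (fun x => covS L x)
        (fun _ => Classical.propDecidable _) U) := by
      exact Finset.mem_filter.mpr ⟨hpU, covS_of_mem hp⟩
    have hvnot : v ∉ ((@Finset.filter _ (fun x => covS L x)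
        (fun _ => Classical.propDecidable _) U).erase p) := by
      intro h
      exact hv (Finset.mem_filter.mp (Finset.mem_of_mem_erase h)).2
    have hge : 1 ≤ (@Finset.filter _ (fun x => covS L x)
        (fun _ => Classical.propDecidable _) U).card := Finset.card_pos.2 ⟨p, hpmem⟩
    unfold covN
    rw [hset, Finset.card_insert_of_notMem hvnot, Finset.card_erase_of_mem hpmem]
    omega
  exact ⟨hpU, hGsw, hcN, hnotp, hcnt⟩

variable (G U) in
/-- Alternating reachability from the holes, with rank `n`. -/
def Rch (L : V → Finset V) : ℕ → V → Prop
  | 0 => fun v => v ∈ U ∧ ¬ covS L v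
  | (n+1) => fun v => Rch L n v ∨ ∃ v' w, Rch L n v' ∧ G.Adj v' w ∧ v ∈ L w

lemma rch_zero {L : V → Finset V} {v : V} :
    Rch G U L 0 v ↔ (v ∈ U ∧ ¬ covS L v) := Iff.rfl

lemma rch_succ_iff {L : V → Finset V} {n : ℕ} {v : V} :
    Rch G U L (n+1) v ↔ (Rch G U L n v ∨ ∃ v' w, Rch G U L n v' ∧ G.Adj v' w ∧ v ∈ L w) :=
  Iff.rfl

lemma rch_cases {L : V → Finset V} : ∀ n v, Rch G U L n v → (¬ covS L v ∨ ∃ w, v ∈ L w) := by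
  intro n
  induction n with
  | zero => intro v hv; exact Or.inl hv.2
  | succ n IH =>
    intro v hv
    rcases (rch_succ_iff.1 hv) with h | ⟨v', w, _, _, hvw⟩
    · exact IH v h
    · exact Or.inr ⟨w, hvw⟩

/-- The key invariant: every reachable vertex lies in `U` and can be made into a hole
by an equal-coverage modification that only touches stars whose leaves are reachable. -/
lemma key (hk : 2 ≤ k) (hG : GoodSys G k L)
    (hmax : ∀ L', GoodSys G k L' → covN U L' ≤ covN U L) :
    ∀ n v, Rch G U L n v → v ∈ U ∧ ∃ L', GoodSys G k L' ∧ covN U L' = covN U L ∧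
      ¬ covS L' v ∧ (∀ c, (L' c).card = (L c).card) ∧
      (∀ c, L' c ≠ L c → ∀ u ∈ L c, Rch G U L n u) := by
  intro n
  induction n with
  | zero =>
    intro v hv
    exact ⟨hv.1, L, hG, rfl, hv.2, fun _ => rfl, fun c hc => absurd rfl hc⟩
  | succ n IH =>
    intro v hv
    rcases (rch_succ_iff.1 hv) with hv | ⟨v', w, hv', hadj, hvw⟩
    · obtain ⟨h1, L', h2, h3, h4, h5, h6⟩ := IH v hv
      exact ⟨h1, L', h2, h3, h4, h5,
        fun c hc u hu => rch_succ_iff.2 (Or.inl (h6 c hc u hu))⟩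
    · obtain ⟨hv'U, L', hG', hcN, hhole, hcnt, hinv⟩ := IH v' hv'
      by_cases hLw : L' w = L w
      · have hvLw' : v ∈ L' w := by rw [hLw]; exact hvw
        have hmax' : ∀ L'', GoodSys G k L'' → covN U L'' ≤ covN U L' := by
          intro L'' h''; rw [hcN]; exact hmax L'' h''
        obtain ⟨hvU, hGsw, hcNsw, hnot, hcntsw⟩ :=
          swap_hole hG' hmax' hv'U hhole hadj hvLw'
        refine ⟨hvU, Function.update L' w (insert v' ((L' w).erase v)), hGsw,
          by rw [hcNsw, hcN], hnot, fun c => by rw [hcntsw c, hcnt c], ?_⟩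
        intro c hc u hu
        by_cases hcw : c = w
        · exact rch_succ_iff.2 (Or.inr ⟨v', w, hv', hadj, by rw [← hcw]; exact hu⟩)
        · have heq : Function.update L' w (insert v' ((L' w).erase v)) c = L' c :=
            Function.update_of_ne hcw _ _
          rw [heq] at hc
          exact rch_succ_iff.2 (Or.inl (hinv c hc u hu))
      · have hrch : Rch G U L n v := hinv w hLw v hvw
        obtain ⟨h1, L'', h2, h3, h4, h5, h6⟩ := IH v hrch
        exact ⟨h1, L'', h2, h3, h4, h5,
          fun c hc u hu => rch_succ_iff.2 (Or.inl (h6 c hc u hu))⟩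

/-- The core lemma : from a maximum star system we extract a stable set witnessing the defect. -/
lemma core (hk : 2 ≤ k) (hG : GoodSys G k L)
    (hmax : ∀ L', GoodSys G k L' → covN U L' ≤ covN U L) :
    ∃ S : Finset V, S ⊆ U ∧ IsStable G S ∧
      U.card ≤ covN U L + (S.card - k * (nbr G S).card) := by
  classical
  set Sf : Finset V := Finset.univ.filter (fun v => ∃ n, Rch G U L n v) with hSf
  have hmem : ∀ v, v ∈ Sf ↔ ∃ n, Rch G U L n v := by
    intro v; rw [hSf, Finset.mem_filter]; simp
  have hSU : Sf ⊆ U := by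
    intro v hv
    obtain ⟨n, hn⟩ := (hmem v).1 hv
    exact (key hk hG hmax n v hn).1
  -- every external neighbour of Sf is a full center whose leaves lie in Sf
  have hfull : ∀ w ∈ nbr G Sf, (L w).card = k ∧ ∀ u ∈ L w, u ∈ Sf := by
    intro w hw
    rw [nbr, Finset.mem_filter] at hw
    obtain ⟨-, -, v, hvS, hadj⟩ := hw
    obtain ⟨n, hn⟩ := (hmem v).1 hvS
    obtain ⟨hvU, L', hG', hcN, hhole, hcnt, -⟩ := key hk hG hmax n v hn
    have hmax' : ∀ L'', GoodSys G k L'' → covN U L'' ≤ covN U L' := by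
      intro L'' h''; rw [hcN]; exact hmax L'' h''
    have hcard : (L' w).card = k := hole_nbr_full hk hG' hmax' hvU hhole hadj
    constructor
    · rw [← hcnt w]; exact hcard
    · intro u hu
      exact (hmem u).2 ⟨n + 1, rch_succ_iff.2 (Or.inr ⟨v, w, hn, hadj, hu⟩)⟩
  have hstable : IsStable G Sf := by
    intro u hu v hv hadj
    obtain ⟨n, hn⟩ := (hmem v).1 hv
    obtain ⟨hvU, L', hG', hcN, hhole, hcnt, -⟩ := key hk hG hmax n v hn
    have hmax' : ∀ L'', GoodSys G k L'' → covN U L'' ≤ covN U L' := by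
      intro L'' h''; rw [hcN]; exact hmax L'' h''
    have hcard : (L' u).card = k := hole_nbr_full hk hG' hmax' hvU hhole hadj.symm
    have hcardu : (L u).card = k := by rw [← hcnt u]; exact hcard
    have hune : L u ≠ ∅ := by
      intro h
      rw [h, Finset.card_empty] at hcardu
      omega
    obtain ⟨m, hm⟩ := (hmem u).1 hu
    rcases rch_cases m u hm with h1 | ⟨w', hw'⟩
    · exact h1 (covS_center hune)
    · exact center_not_leaf hG hune hw'
  -- counting
  set X : Finset V := U.filter (fun v => ¬ covS L v) with hX
  have hXS : X ⊆ Sf := by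
    intro v hv
    rw [hX, Finset.mem_filter] at hv
    exact (hmem v).2 ⟨0, rch_zero.2 ⟨hv.1, hv.2⟩⟩
  have hXcard : covN U L + X.card = U.card := by
    rw [hX]
    unfold covN
    exact Finset.card_filter_add_card_filter_not (p := fun v => covS L v)
  set T : Finset V := nbr G Sf with hT
  have hdisj : ∀ a ∈ T, ∀ b ∈ T, a ≠ b → Disjoint (L a) (L b) := by
    intro a _ b _ hab
    rw [Finset.disjoint_left]
    intro x hxa hxb
    exact hab (hG.2.2 x a b ⟨Finset.ne_empty_of_mem hxa, Or.inr hxa⟩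
      ⟨Finset.ne_empty_of_mem hxb, Or.inr hxb⟩)
  have hbU : T.biUnion L ⊆ Sf := by
    intro x hx
    obtain ⟨w, hw, hxw⟩ := Finset.mem_biUnion.1 hx
    exact (hfull w hw).2 x hxw
  have hXdisj : Disjoint X (T.biUnion L) := by
    rw [Finset.disjoint_left]
    intro x hxX hxB
    rw [hX, Finset.mem_filter] at hxX
    obtain ⟨w, hw, hxw⟩ := Finset.mem_biUnion.1 hxB
    exact hxX.2 (covS_of_mem hxw)
  have hbUcard : (T.biUnion L).card = k * T.card := by
    rw [Finset.card_biUnion hdisj]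
    rw [Finset.sum_congr rfl (fun w hw => (hfull w hw).1)]
    rw [Finset.sum_const, smul_eq_mul, mul_comm]
  have hsub : X ∪ T.biUnion L ⊆ Sf := Finset.union_subset hXS hbU
  have hcards : X.card + k * T.card ≤ Sf.card := by
    have h1 := Finset.card_le_card hsub
    rw [Finset.card_union_of_disjoint hXdisj, hbUcard] at h1
    exact h1
  have hcovle : covN U L ≤ U.card := by
    unfold covN
    exact Finset.card_filter_le _ _
  refine ⟨Sf, hSU, hstable, ?_⟩
  have hTeq : nbr G Sf = T := hT.symm
  rw [hTeq]
  omega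

/-- Easy direction: any `k` matchings miss at least the defect of any stable set. -/
lemma easy_bound (hk : 2 ≤ k) {M : Fin k → Finset (Sym2 V)} (hM : ∀ i, IsMatching G (M i))
    {S : Finset V} (hS : S ⊆ U) (hst : IsStable G S) :
    (U.filter fun v : V => ∃ i, Covers (M i) v).card + (S.card - k * (nbr G S).card)
      ≤ U.card := by
  classical
  have key1 : (S.filter fun v : V => ∃ i, Covers (M i) v).card ≤ k * (nbr G S).card := by
    have hmaps : ∀ v ∈ S.filter (fun v : V => ∃ i, Covers (M i) v),
        ∃ wi : V × Fin k, s(v, wi.1) ∈ M wi.2 ∧ wi.1 ∈ nbr G S := by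
      intro v hv
      rw [Finset.mem_filter] at hv
      obtain ⟨hvS, i, e, heM, hvem⟩ := hv
      have hedge : e ∈ G.edgeSet := (hM i).1 heM
      have hsp : s(v, Sym2.Mem.other hvem) = e := Sym2.other_spec hvem
      have hadj : G.Adj v (Sym2.Mem.other hvem) := by
        rw [← SimpleGraph.mem_edgeSet, hsp]
        exact hedge
      have hwS : Sym2.Mem.other hvem ∉ S := fun hwS => hst v hvS _ hwS hadj
      have hwnbr : Sym2.Mem.other hvem ∈ nbr G S := by
        rw [nbr, Finset.mem_filter]
        exact ⟨Finset.mem_univ _, hwS, v, hvS, hadj⟩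
      exact ⟨(Sym2.Mem.other hvem, i), by rw [hsp]; exact heM, hwnbr⟩
    rcases Finset.eq_empty_or_nonempty (S.filter fun v : V => ∃ i, Covers (M i) v) with
      hemp | ⟨v₀, hv₀⟩
    · rw [hemp]; simp
    · set g : V → V × Fin k := fun v =>
        if h : ∃ wi : V × Fin k, s(v, wi.1) ∈ M wi.2 ∧ wi.1 ∈ nbr G S then h.choose
        else (v₀, ⟨0, by omega⟩) with hg
      have hgspec : ∀ v ∈ S.filter (fun v : V => ∃ i, Covers (M i) v),
          s(v, (g v).1) ∈ M (g v).2 ∧ (g v).1 ∈ nbr G S := by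
        intro v hv
        have hex := hmaps v hv
        rw [hg]
        simp only [dif_pos hex]
        exact hex.choose_spec
      have hle : (S.filter fun v : V => ∃ i, Covers (M i) v).card
          ≤ ((nbr G S) ×ˢ (Finset.univ : Finset (Fin k))).card := by
        apply Finset.card_le_card_of_injOn g
        · intro v hv
          rw [Finset.mem_coe, Finset.mem_product]
          exact ⟨(hgspec v hv).2, Finset.mem_univ _⟩
        · intro a ha' b hb' hab
          have ha : a ∈ S.filter fun v : V => ∃ i, Covers (M i) v := ha'
          have hb : b ∈ S.filter fun v : V => ∃ i, Covers (M i) v := hb'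
          have hA := hgspec a ha
          have hB := hgspec b hb
          rw [hab] at hA
          have haS : a ∈ S := (Finset.mem_filter.1 ha).1
          have hbS : b ∈ S := (Finset.mem_filter.1 hb).1
          have hgb1 : (g b).1 ∉ S := by
            have := hB.2
            rw [nbr, Finset.mem_filter] at this
            exact this.2.1
          by_cases he : s(a, (g b).1) = s(b, (g b).1)
          · rw [Sym2.eq_iff] at he
            rcases he with ⟨h1, _⟩ | ⟨h1, h2⟩
            · exact h1
            · exact absurd (h1 ▸ haS) hgb1
          · exfalso
            have := (hM (g b).2).2 (Finset.mem_coe.2 hA.1) (Finset.mem_coe.2 hB.1) he (g b).1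
            exact this ⟨Sym2.mem_mk_right _ _, Sym2.mem_mk_right _ _⟩
      rw [Finset.card_product, Finset.card_univ, Fintype.card_fin, mul_comm] at hle
      exact hle
  have hsplitS : (S.filter fun v : V => ∃ i, Covers (M i) v).card
      + (S.filter fun v : V => ¬ ∃ i, Covers (M i) v).card = S.card :=
    Finset.card_filter_add_card_filter_not (p := fun v : V => ∃ i, Covers (M i) v)
  have hsplitU : (U.filter fun v : V => ∃ i, Covers (M i) v).card
      + (U.filter fun v : V => ¬ ∃ i, Covers (M i) v).card = U.card :=
    Finset.card_filter_add_card_filter_not (p := fun v : V => ∃ i, Covers (M i) v)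
  have hsub2 : (S.filter fun v : V => ¬ ∃ i, Covers (M i) v).card
      ≤ (U.filter fun v : V => ¬ ∃ i, Covers (M i) v).card :=
    Finset.card_le_card (Finset.filter_subset_filter _ hS)
  omega

/-- Converting a star system into `k` matchings covering the same vertices. -/
lemma stars_to_matchings (hk : 2 ≤ k) (hG : GoodSys G k L) :
    ∃ M : Fin k → Finset (Sym2 V), (∀ i, IsMatching G (M i)) ∧
      covN U L ≤ (U.filter fun v : V => ∃ i, Covers (M i) v).card := by
  classical
  set M : Fin k → Finset (Sym2 V) := fun i =>
    Finset.univ.biUnion (fun c =>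
      if h : (i : ℕ) < (L c).toList.length then {s(c, (L c).toList.get ⟨i, h⟩)} else ∅)
    with hM
  have hmem : ∀ (i : Fin k) (e : Sym2 V), e ∈ M i ↔
      ∃ c, ∃ h : (i : ℕ) < (L c).toList.length, e = s(c, (L c).toList.get ⟨i, h⟩) := by
    intro i e
    rw [hM]
    simp only [Finset.mem_biUnion, Finset.mem_univ, true_and]
    constructor
    · rintro ⟨c, hc⟩
      by_cases h : (i : ℕ) < (L c).toList.length
      · rw [dif_pos h, Finset.mem_singleton] at hc
        exact ⟨c, h, hc⟩
      · rw [dif_neg h] at hc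
        exact absurd hc (Finset.notMem_empty e)
    · rintro ⟨c, h, rfl⟩
      exact ⟨c, by rw [dif_pos h]; exact Finset.mem_singleton_self _⟩
  have hgetmem : ∀ (c : V) (n : ℕ) (h : n < (L c).toList.length),
      (L c).toList.get ⟨n, h⟩ ∈ L c := by
    intro c n h
    exact Finset.mem_toList.1 (List.get_mem _ ⟨n, h⟩)
  have hmatch : ∀ i, IsMatching G (M i) := by
    intro i
    constructor
    · intro e he
      obtain ⟨c, h, rfl⟩ := (hmem i e).1 (Finset.mem_coe.1 he)
      rw [SimpleGraph.mem_edgeSet]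
      exact hG.1 c _ (hgetmem c i h)
    · intro e he f hf hef x hx
      obtain ⟨c, h1, he'⟩ := (hmem i e).1 (Finset.mem_coe.1 he)
      obtain ⟨c', h2, hf'⟩ := (hmem i f).1 (Finset.mem_coe.1 hf)
      by_cases hcc : c = c'
      · apply hef
        rw [he', hf']
        subst hcc
        rfl
      · have hne1 : L c ≠ ∅ := by
          intro hemp
          rw [hemp] at h1
          simp at h1
        have hne2 : L c' ≠ ∅ := by
          intro hemp
          rw [hemp] at h2
          simp at h2
        have hx1 : x = c ∨ x ∈ L c := by
          have := hx.1
          rw [he', Sym2.mem_iff] at this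
          rcases this with h | h
          · exact Or.inl h
          · exact Or.inr (by rw [h]; exact hgetmem c i h1)
        have hx2 : x = c' ∨ x ∈ L c' := by
          have := hx.2
          rw [hf', Sym2.mem_iff] at this
          rcases this with h | h
          · exact Or.inl h
          · exact Or.inr (by rw [h]; exact hgetmem c' i h2)
        exact hcc (hG.2.2 x c c' ⟨hne1, hx1⟩ ⟨hne2, hx2⟩)
  have hcov : ∀ v ∈ U, covS L v → ∃ i : Fin k, Covers (M i) v := by
    intro v _ hv
    obtain ⟨c, hcne, hcm⟩ := hv
    rcases hcm with h | hleaf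
    · have hlen : 0 < (L c).toList.length := by
        rw [Finset.length_toList]
        exact Finset.card_pos.2 (Finset.nonempty_iff_ne_empty.2 hcne)
      refine ⟨⟨0, by omega⟩, s(c, (L c).toList.get ⟨0, hlen⟩), ?_, ?_⟩
      · exact (hmem _ _).2 ⟨c, hlen, rfl⟩
      · rw [h]; exact Sym2.mem_mk_left _ _
    · obtain ⟨j, hget⟩ := List.mem_iff_get.1 (Finset.mem_toList.2 hleaf)
      have hjk : (j : ℕ) < k := by
        have hj2 := j.2
        have hcard : (L c).toList.length = (L c).card := Finset.length_toList _
        have := hG.2.1 c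
        omega
      refine ⟨⟨j, hjk⟩, s(c, v), ?_, Sym2.mem_mk_right _ _⟩
      refine (hmem _ _).2 ⟨c, j.2, ?_⟩
      have : (L c).toList.get ⟨(j : ℕ), j.2⟩ = v := by
        rw [← hget]
      rw [this]
  refine ⟨M, hmatch, ?_⟩
  unfold covN
  apply Finset.card_le_card
  intro v hv
  have h1 := (Finset.mem_filter.1 hv).1
  have h2 := (Finset.mem_filter.1 hv).2
  exact Finset.mem_filter.2 ⟨h1, hcov v h1 h2⟩

end Stmt5Aux

open Stmt5Aux in
theorem stmt_5 {V : Type*} [Fintype V] [DecidableEq V] (G : SimpleGraph V) [DecidableRel G.Adj]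
    (k : ℕ) (hk : 2 ≤ k) (U : Finset V) :
    sSup {n : ℕ | ∃ M : Fin k → Finset (Sym2 V), (∀ i, IsMatching G (M i)) ∧
        n = (U.filter fun v : V => ∃ i, Covers (M i) v).card} =
      U.card -
        sSup {d : ℕ | ∃ S : Finset V, S ⊆ U ∧ IsStable G S ∧
          d = S.card - k * (nbr G S).card} := by
  classical
  set A : Set ℕ := {n : ℕ | ∃ M : Fin k → Finset (Sym2 V), (∀ i, IsMatching G (M i)) ∧
        n = (U.filter fun v : V => ∃ i, Covers (M i) v).card} with hA
  set D : Set ℕ := {d : ℕ | ∃ S : Finset V, S ⊆ U ∧ IsStable G S ∧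
          d = S.card - k * (nbr G S).card} with hD
  have hA0 : (0 : ℕ) ∈ A := by
    rw [hA]
    refine ⟨fun _ => (∅ : Finset (Sym2 V)), fun i => ⟨by simp, by simp⟩, ?_⟩
    have : (U.filter fun v : V => ∃ i : Fin k, Covers (∅ : Finset (Sym2 V)) v) = ∅ := by
      apply Finset.filter_false_of_mem
      intro v _
      rintro ⟨i, e, he, -⟩
      exact absurd he (Finset.notMem_empty e)
    rw [this, Finset.card_empty]
  have hAbdd : BddAbove A := by
    refine ⟨U.card, ?_⟩
    rintro n ⟨M, hM, rfl⟩
    exact Finset.card_filter_le _ _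
  have hD0 : (0 : ℕ) ∈ D := by
    rw [hD]
    refine ⟨∅, Finset.empty_subset _, ?_, by simp⟩
    intro u hu
    exact absurd hu (Finset.notMem_empty u)
  have hDbdd : BddAbove D := by
    refine ⟨U.card, ?_⟩
    rintro d ⟨S, hSU, -, rfl⟩
    exact le_trans (Nat.sub_le _ _) (Finset.card_le_card hSU)
  obtain ⟨Mx, hMx, hMxcard⟩ := Nat.sSup_mem ⟨0, hA0⟩ hAbdd
  obtain ⟨Sx, hSxU, hSxst, hSxcard⟩ := Nat.sSup_mem ⟨0, hD0⟩ hDbdd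
  have h1 : sSup A + sSup D ≤ U.card := by
    rw [hMxcard, hSxcard]
    exact easy_bound hk hMx hSxU hSxst
  -- maximum star system
  set P : Set ℕ := {n : ℕ | ∃ L : V → Finset V, GoodSys G k L ∧ n = covN U L} with hP
  have hP0 : covN U (fun _ => (∅ : Finset V)) ∈ P := by
    rw [hP]
    refine ⟨fun _ => ∅, ⟨?_, ?_, ?_⟩, rfl⟩
    · intro c v hv
      exact absurd hv (Finset.notMem_empty v)
    · intro c
      simp
    · intro v c c' h _
      exact absurd rfl h.1
  have hPbdd : BddAbove P := by
    refine ⟨U.card, ?_⟩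
    rintro n ⟨L, -, rfl⟩
    exact Finset.card_filter_le _ _
  obtain ⟨Lx, hLxG, hLxcard⟩ := Nat.sSup_mem ⟨_, hP0⟩ hPbdd
  have hLxmax : ∀ L', GoodSys G k L' → covN U L' ≤ covN U Lx := by
    intro L' h'
    rw [← hLxcard]
    exact le_csSup hPbdd ⟨L', h', rfl⟩
  obtain ⟨Sf, hSfU, hSfst, hSfineq⟩ := core hk hLxG hLxmax
  obtain ⟨Ms, hMs, hMsle⟩ := stars_to_matchings (U := U) hk hLxG
  have hdle : Sf.card - k * (nbr G Sf).card ≤ sSup D :=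
    le_csSup hDbdd ⟨Sf, hSfU, hSfst, rfl⟩
  have hcovle : covN U Lx ≤ sSup A :=
    le_trans hMsle (le_csSup hAbdd ⟨Ms, hMs, rfl⟩)
  have h2 : U.card ≤ sSup A + sSup D := by
    have := hSfineq
    omega
  omega
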